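/- Let V : ℓ₁(ℕ × ℕ) → ℓ₁(ℕ × ℕ) be a continuous linear operator satisfying V e_{(m,n)} = e_{(m+1,n)} for all (m, n) ∈ ℕ × ℕ. Then V is surjectively universal in the category of separable Banach spaces: for every separable real Banach space E and every continuous linear operator f : E → E with operator norm at most 1, there exists a surjective continuous linear operator q : ℓ₁(ℕ × ℕ) → E with operator norm at most 1 such that f ∘ q = q ∘ V. -/

import Mathlib

open TopologicalSpace

theorem basic_shift_operator_universal
    (V : lp (fun _ : ℕ × ℕ => ℝ) 1 →L[ℝ] lp (fun _ : ℕ × ℕ => ℝ) 1)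
    (hV : ∀ mn : ℕ × ℕ, V (lp.single 1 mn (1 : ℝ)) = lp.single 1 (mn.1 + 1, mn.2) (1 : ℝ)) :
    ∀ (E : Type) [NormedAddCommGroup E] [NormedSpace ℝ E] [CompleteSpace E]
      [SeparableSpace E] (f : E →L[ℝ] E), ‖f‖ ≤ 1 →
      ∃ q : lp (fun _ : ℕ × ℕ => ℝ) 1 →L[ℝ] E, Function.Surjective q ∧ ‖q‖ ≤ 1 ∧
        ∀ x, f (q x) = q (V x) := by
  intro E _ _ _ _ f hf
  haveI : Fact ((1:ENNReal) ≤ 1) := ⟨le_refl _⟩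
  -- a dense sequence, truncated into the unit ball
  obtain ⟨d, hd⟩ := TopologicalSpace.exists_dense_seq E
  set v : ℕ → E := fun n => if ‖d n‖ < 1 then d n else 0 with hv_def
  have hv_norm : ∀ n, ‖v n‖ ≤ 1 := by
    intro n
    by_cases h : ‖d n‖ < 1 <;> simp [hv_def, h]
    linarith
  have hv_dense : ∀ y : E, ‖y‖ < 1 → ∀ ε > 0, ∃ n, ‖y - v n‖ < ε := by
    intro y hy ε hε
    obtain ⟨n, hn⟩ := hd.exists_dist_lt y (lt_min hε (by linarith) : (0:ℝ) < min ε (1 - ‖y‖))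
    rw [dist_eq_norm] at hn
    have hdn : ‖d n‖ < 1 := by
      have h1 : ‖d n - y‖ < 1 - ‖y‖ := by
        rw [norm_sub_rev]; exact lt_of_lt_of_le hn (min_le_right _ _)
      calc ‖d n‖ = ‖y + (d n - y)‖ := by rw [show y + (d n - y) = d n from by abel]
        _ ≤ ‖y‖ + ‖d n - y‖ := norm_add_le _ _
        _ < 1 := by linarith
    refine ⟨n, ?_⟩
    simp only [hv_def, if_pos hdn]
    exact lt_of_lt_of_le hn (min_le_left _ _)
  set g : ℕ × ℕ → E := fun mn => (f ^ mn.1) (v mn.2) with hg_def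
  have hpow : ∀ m : ℕ, ∀ x : E, ‖(f ^ m) x‖ ≤ ‖x‖ := by
    intro m
    induction m with
    | zero => intro x; simp
    | succ m ih =>
      intro x
      rw [pow_succ]
      calc ‖(f ^ m) (f x)‖ ≤ ‖f x‖ := ih (f x)
        _ ≤ ‖f‖ * ‖x‖ := f.le_opNorm x
        _ ≤ 1 * ‖x‖ := by gcongr
        _ = ‖x‖ := one_mul _
  have hg : ∀ mn, ‖g mn‖ ≤ 1 := fun mn => (hpow mn.1 (v mn.2)).trans (hv_norm mn.2)
  have hxsum : ∀ x : lp (fun _ : ℕ × ℕ => ℝ) 1, HasSum (fun mn => ‖x mn‖) ‖x‖ := by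
    intro x
    simpa using lp.hasSum_norm (by norm_num) x
  have hns : ∀ x : lp (fun _ : ℕ × ℕ => ℝ) 1, Summable (fun mn => ‖x mn • g mn‖) := by
    intro x
    refine Summable.of_nonneg_of_le (fun _ => norm_nonneg _) (fun mn => ?_) (hxsum x).summable
    rw [norm_smul]
    exact mul_le_of_le_one_right (norm_nonneg _) (hg mn)
  have hsum : ∀ x : lp (fun _ : ℕ × ℕ => ℝ) 1, Summable (fun mn => x mn • g mn) :=
    fun x => (hns x).of_norm
  set L : lp (fun _ : ℕ × ℕ => ℝ) 1 →ₗ[ℝ] E :=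
    { toFun := fun x => ∑' mn, x mn • g mn
      map_add' := by
        intro x y
        have h : (fun mn => (x + y : lp (fun _ : ℕ × ℕ => ℝ) 1) mn • g mn)
            = fun mn => x mn • g mn + y mn • g mn := by
          funext mn
          rw [lp.coeFn_add, Pi.add_apply, add_smul]
        simp only [h]
        exact Summable.tsum_add (hsum x) (hsum y)
      map_smul' := by
        intro c x
        have h : (fun mn => (c • x : lp (fun _ : ℕ × ℕ => ℝ) 1) mn • g mn)
            = fun mn => c • (x mn • g mn) := by
          funext mn
          rw [lp.coeFn_smul, Pi.smul_apply, smul_smul, smul_eq_mul]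
        simp only [h, RingHom.id_apply]
        exact (Summable.tsum_const_smul c (hsum x)) } with hL_def
  have hLbound : ∀ x, ‖L x‖ ≤ 1 * ‖x‖ := by
    intro x
    rw [one_mul]
    calc ‖∑' mn, x mn • g mn‖ ≤ ∑' mn, ‖x mn • g mn‖ := norm_tsum_le_tsum_norm (hns x)
      _ ≤ ∑' mn, ‖x mn‖ := by
          refine Summable.tsum_le_tsum (fun mn => ?_) (hns x) (hxsum x).summable
          rw [norm_smul]
          exact mul_le_of_le_one_right (norm_nonneg _) (hg mn)
      _ = ‖x‖ := (hxsum x).tsum_eq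
  set q : lp (fun _ : ℕ × ℕ => ℝ) 1 →L[ℝ] E := L.mkContinuous 1 hLbound with hq_def
  have hq_apply : ∀ x, q x = ∑' mn, x mn • g mn := fun x => rfl
  have hq_single : ∀ mn : ℕ × ℕ, q (lp.single 1 mn (1:ℝ)) = g mn := by
    intro mn
    rw [hq_apply]
    rw [tsum_eq_single mn (fun j hj => by rw [lp.single_apply_ne _ _ _ hj, zero_smul])]
    rw [lp.single_apply_self, one_smul]
  have hq_norm : ‖q‖ ≤ 1 := L.mkContinuous_norm_le zero_le_one hLbound
  have hrep : ∀ x : lp (fun _ : ℕ × ℕ => ℝ) 1,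
      HasSum (fun mn => lp.single 1 mn (x mn)) x :=
    fun x => lp.hasSum_single (by norm_num) x
  have hsingle_smul : ∀ (mn : ℕ × ℕ) (c : ℝ),
      (lp.single 1 mn c : lp (fun _ : ℕ × ℕ => ℝ) 1) = c • lp.single 1 mn (1:ℝ) := by
    intro mn c
    refine lp.ext (funext fun j => ?_)
    rw [lp.coeFn_smul, Pi.smul_apply]
    by_cases hj : j = mn
    · subst hj
      rw [lp.single_apply_self, lp.single_apply_self, smul_eq_mul, mul_one]
    · rw [lp.single_apply_ne _ _ _ hj, lp.single_apply_ne _ _ _ hj, smul_zero]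
  refine ⟨q, ?_, hq_norm, ?_⟩
  · -- surjectivity
    intro y
    have approx : ∀ z : E, ∃ n, ‖z - (2 * ‖z‖) • v n‖ ≤ ‖z‖ / 2 := by
      intro z
      rcases eq_or_ne z 0 with rfl | hz
      · exact ⟨0, by simp⟩
      · have hz' : (0:ℝ) < ‖z‖ := norm_pos_iff.mpr hz
        set w : E := (2 * ‖z‖)⁻¹ • z with hw_def
        have hw : ‖w‖ < 1 := by
          rw [hw_def, norm_smul, norm_inv, Real.norm_eq_abs, abs_of_pos (by positivity)]
          rw [inv_mul_eq_div, div_lt_one (by positivity)]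
          linarith
        obtain ⟨n, hn⟩ := hv_dense w hw (1/4) (by norm_num)
        refine ⟨n, ?_⟩
        have hzw : z = (2 * ‖z‖) • w := by
          rw [hw_def, smul_smul, mul_inv_cancel₀ (by positivity), one_smul]
        calc ‖z - (2 * ‖z‖) • v n‖ = ‖(2 * ‖z‖) • (w - v n)‖ := by
              rw [smul_sub, ← hzw]
          _ = (2 * ‖z‖) * ‖w - v n‖ := by
              rw [norm_smul, Real.norm_eq_abs, abs_of_pos (by positivity)]
          _ ≤ (2 * ‖z‖) * (1/4) := by
              exact mul_le_mul_of_nonneg_left hn.le (by positivity)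
          _ = ‖z‖ / 2 := by ring
    choose F hF using approx
    set Z : ℕ → E := fun k => (fun z => z - (2 * ‖z‖) • v (F z))^[k] y with hZ_def
    have hZ0 : Z 0 = y := rfl
    have hZs : ∀ k, Z (k + 1) = Z k - (2 * ‖Z k‖) • v (F (Z k)) := by
      intro k
      rw [hZ_def]
      exact Function.iterate_succ_apply' _ _ _
    have hZnorm : ∀ k, ‖Z k‖ ≤ ‖y‖ / 2 ^ k := by
      intro k
      induction k with
      | zero => simp [hZ0]
      | succ k ih =>
        rw [hZs k]
        calc ‖Z k - (2 * ‖Z k‖) • v (F (Z k))‖ ≤ ‖Z k‖ / 2 := hF (Z k)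
          _ ≤ (‖y‖ / 2 ^ k) / 2 := by linarith
          _ = ‖y‖ / 2 ^ (k + 1) := by ring
    set a : ℕ → lp (fun _ : ℕ × ℕ => ℝ) 1 :=
      fun k => (2 * ‖Z k‖) • lp.single 1 (0, F (Z k)) (1:ℝ) with ha_def
    have hanorm : ∀ k, ‖a k‖ = 2 * ‖Z k‖ := by
      intro k
      rw [ha_def]
      have h1 : ‖lp.single (E := fun _ : ℕ × ℕ => ℝ) 1 (0, F (Z k)) (1:ℝ)‖ = 1 := by
        have := lp.norm_single (E := fun _ : ℕ × ℕ => ℝ) (by norm_num : (0:ENNReal) < 1)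
          (0, F (Z k)) (1:ℝ)
        simpa using this
      rw [norm_smul, h1, mul_one, Real.norm_eq_abs, abs_of_nonneg (by positivity)]
    have hasummable : Summable a := by
      refine Summable.of_norm ?_
      refine Summable.of_nonneg_of_le (fun _ => norm_nonneg _) (fun k => ?_)
        ((summable_geometric_two).mul_left (2 * ‖y‖))
      rw [hanorm k]
      calc 2 * ‖Z k‖ ≤ 2 * (‖y‖ / 2 ^ k) := by
            have := hZnorm k; linarith
        _ = 2 * ‖y‖ * (1/2) ^ k := by
            rw [div_pow, one_pow]; ring
    obtain ⟨x0, hx0⟩ := hasummable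
    refine ⟨x0, ?_⟩
    have hterm2 : ∀ k, q (a k) = Z k - Z (k + 1) := by
      intro k
      rw [ha_def]
      simp only [map_smul]
      rw [hq_single]
      have hg0 : g (0, F (Z k)) = v (F (Z k)) := by
        rw [hg_def]; simp
      rw [hg0, hZs k]
      abel
    have hq1 : HasSum (fun k => Z k - Z (k + 1)) (q x0) := by
      have := q.hasSum hx0
      simpa only [hterm2] using this
    have hZtend : Filter.Tendsto Z Filter.atTop (nhds 0) := by
      refine squeeze_zero_norm hZnorm ?_
      have h2 : Filter.Tendsto (fun k : ℕ => (1/2:ℝ) ^ k) Filter.atTop (nhds 0) :=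
        tendsto_pow_atTop_nhds_zero_of_lt_one (by norm_num) (by norm_num)
      have := h2.const_mul ‖y‖
      simp only [mul_zero] at this
      convert this using 2 with k
      rw [div_pow, one_pow, div_eq_mul_inv, ← one_div]
    have hq2 : Filter.Tendsto (fun K => ∑ k ∈ Finset.range K, (Z k - Z (k + 1)))
        Filter.atTop (nhds (q x0)) := hq1.tendsto_sum_nat
    have hq3 : Filter.Tendsto (fun K => ∑ k ∈ Finset.range K, (Z k - Z (k + 1)))
        Filter.atTop (nhds y) := by
      have heq : ∀ K, ∑ k ∈ Finset.range K, (Z k - Z (k + 1)) = Z 0 - Z K :=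
        fun K => Finset.sum_range_sub' Z K
      simp only [heq, hZ0]
      have := Filter.Tendsto.const_sub y hZtend
      simpa using this
    exact tendsto_nhds_unique hq2 hq3
  · -- commutation
    intro x
    have hterm : ∀ mn : ℕ × ℕ, q (V (lp.single 1 mn (x mn))) = f (q (lp.single 1 mn (x mn))) := by
      intro mn
      rw [hsingle_smul mn (x mn), map_smul, map_smul, hV, map_smul, map_smul,
        hq_single, hq_single]
      congr 1
      show (f ^ (mn.1 + 1)) (v mn.2) = f ((f ^ mn.1) (v mn.2))
      rw [pow_succ']
      rfl
    have hA : HasSum (fun mn => q (V (lp.single 1 mn (x mn)))) (q (V x)) :=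
      q.hasSum (V.hasSum (hrep x))
    have hB : HasSum (fun mn => f (q (lp.single 1 mn (x mn)))) (f (q x)) :=
      f.hasSum (q.hasSum (hrep x))
    simp only [hterm] at hA
    exact hB.unique hA
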